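/- If two triangulations of the punctured n-gon (n ≥ 5) differ by a rotation or by inverting all tags, then their associated quivers are isomorphic. -/

import Mathlib

/-- A tagged edge of the punctured `n`-gon: a triple `(a, b, ε)`.  For `a ≠ b` it
represents the edge `M_{a,b}` (homotopic to the counterclockwise boundary path from
`a` to `b`, with the tag required to be `true`), and for `a = b` it represents a
tagged edge `M_{a,a}^ε` joining the puncture to the boundary vertex `a`. -/
abbrev TEdge (n : ℕ) := Fin n × Fin n × Bool

/-- The number of counterclockwise steps from `a` to `x` on the boundary. -/
def ccwPos (n : ℕ) (a x : Fin n) : ℕ := (x.val + n - a.val) % n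

/-- `x` lies strictly inside the counterclockwise boundary arc from `a` to `b`. -/
def InArc (n : ℕ) (a b x : Fin n) : Prop :=
  0 < ccwPos n a x ∧ ccwPos n a x < ccwPos n a b

/-- A valid tagged edge: either an edge `M_{a,a}^ε` between the puncture and the
boundary, or an ordinary edge `M_{a,b}` with `|δ_{a,b}| ≥ 3` and trivial tag. -/
def ValidEdge (n : ℕ) (e : TEdge n) : Prop :=
  e.1 = e.2.1 ∨ (e.2.2 = true ∧ 2 ≤ ccwPos n e.1 e.2.1)

/-- The crossing relation (nonzero minimal crossing number) between tagged edges: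
two edges between the puncture and the boundary cross iff they end at different
vertices and carry different tags; an edge between the puncture and the boundary
crosses an ordinary edge iff its boundary vertex lies strictly inside the arc cut
off; two ordinary edges cross iff their endpoints interleave, or each one lies
entirely strictly inside the puncture-free region cut off by the other. -/
def Cross (n : ℕ) (e f : TEdge n) : Prop :=
  if e.1 = e.2.1 then
    if f.1 = f.2.1 then e.1 ≠ f.1 ∧ e.2.2 ≠ f.2.2
    else InArc n f.1 f.2.1 e.1
  else if f.1 = f.2.1 then InArc n e.1 e.2.1 f.1
  else
    Xor' (InArc n e.1 e.2.1 f.1) (InArc n e.1 e.2.1 f.2.1) ∨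
      (InArc n e.1 e.2.1 f.1 ∧ InArc n e.1 e.2.1 f.2.1 ∧
        InArc n f.1 f.2.1 e.1 ∧ InArc n f.1 f.2.1 e.2.1)

/-- A triangulation of the punctured `n`-gon: a maximal set of pairwise
non-crossing (valid) tagged edges. -/
def IsTriangulation (n : ℕ) (Δ : Finset (TEdge n)) : Prop :=
  (∀ e ∈ Δ, ValidEdge n e) ∧
    (∀ e ∈ Δ, ∀ f ∈ Δ, ¬Cross n e f) ∧
    (∀ e, ValidEdge n e → e ∉ Δ → ∃ f ∈ Δ, Cross n e f)

/-- The edge `e` is incident to the boundary vertex `p`. -/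
def Incident (n : ℕ) (p : Fin n) (e : TEdge n) : Prop := e.1 = p ∨ e.2.1 = p

/-- Anticlockwise angular position at the boundary vertex `p` of an edge incident
to `p`: first the edges `M_{p,b}` leaving `p` (nested according to the arc they cut
off), then the tagged edges `M_{p,p}^ε` to the puncture, then the edges `M_{a,p}`
arriving at `p`. -/
def angKey (n : ℕ) (p : Fin n) (e : TEdge n) : ℕ :=
  if e.1 = p ∧ e.2.1 = p then n + (if e.2.2 then 0 else 1)
  else if e.1 = p then ccwPos n p e.2.1
  else 2 * n + ccwPos n p e.1

/-- `β` is obtained from `α` by rotating anticlockwise about a common boundary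
vertex `p`, with no edge of `Δ` strictly between them at `p` (so that `α` and `β`
bound a common triangle of `Δ`); the two tagged edges at a common vertex are
excluded. -/
def BoundaryArrow (n : ℕ) (Δ : Finset (TEdge n)) (α β : TEdge n) : Prop :=
  ∃ p : Fin n, Incident n p α ∧ Incident n p β ∧
    ¬(α.1 = α.2.1 ∧ β.1 = β.2.1) ∧
    angKey n p α < angKey n p β ∧
    ∀ γ ∈ Δ, Incident n p γ →
      ¬(angKey n p α < angKey n p γ ∧ angKey n p γ < angKey n p β)

/-- `β` is obtained from `α` by rotating anticlockwise about the puncture: both are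
edges between the puncture and the boundary and `β` is at the first vertex
counterclockwise after `α` carrying an edge of `Δ` to the puncture. -/
def PunctureArrow (n : ℕ) (Δ : Finset (TEdge n)) (α β : TEdge n) : Prop :=
  α.1 = α.2.1 ∧ β.1 = β.2.1 ∧ α.1 ≠ β.1 ∧
    ∀ γ ∈ Δ, γ.1 = γ.2.1 → γ.1 ≠ α.1 →
      ¬(ccwPos n α.1 γ.1 < ccwPos n α.1 β.1)

/-- An arrow of the quiver of the triangulation `Δ`, before deleting 2-cycles. -/
def RawArrow (n : ℕ) (Δ : Finset (TEdge n)) (α β : TEdge n) : Prop :=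
  α ∈ Δ ∧ β ∈ Δ ∧ α ≠ β ∧ (BoundaryArrow n Δ α β ∨ PunctureArrow n Δ α β)

/-- An arrow of the quiver `Q_Δ` associated to the triangulation `Δ` (oriented
2-cycles are deleted). -/
def QArrow (n : ℕ) (Δ : Finset (TEdge n)) (α β : TEdge n) : Prop :=
  RawArrow n Δ α β ∧ ¬RawArrow n Δ β α

/-- Rotation of the punctured polygon by `k` vertices, acting on tagged edges. -/
def rotEdge (n : ℕ) (k : Fin n) (e : TEdge n) : TEdge n :=
  (e.1 + k, e.2.1 + k, e.2.2)

/-- Inversion of all tags: flips the tag on every edge incident to the puncture. -/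
def invTags (n : ℕ) (e : TEdge n) : TEdge n :=
  (e.1, e.2.1, if e.1 = e.2.1 then !e.2.2 else e.2.2)


namespace S15
variable {n : ℕ}

lemma ccwPos_eq_sub [NeZero n] (a x : Fin n) : ccwPos n a x = (x - a).val := by
  rw [Fin.sub_def]
  have ha := a.isLt
  show (x.val + n - a.val) % n = _
  simp only
  congr 1
  omega

lemma ccwPos_add [NeZero n] (k a x : Fin n) : ccwPos n (a + k) (x + k) = ccwPos n a x := by
  rw [ccwPos_eq_sub, ccwPos_eq_sub, add_sub_add_right_eq_sub]

lemma inArc_add [NeZero n] (k a b x : Fin n) :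
    InArc n (a + k) (b + k) (x + k) ↔ InArc n a b x := by
  simp [InArc, ccwPos_add]

lemma invTags_eq_self {e : TEdge n} (h : ¬ e.1 = e.2.1) : invTags n e = e := by
  simp [invTags, h]

lemma invTags_involutive : Function.Involutive (invTags n) := by
  rintro ⟨a, b, t⟩
  by_cases h : a = b <;> simp [invTags, h]

lemma rotEdge_cancel [NeZero n] (k : Fin n) (e : TEdge n) :
    rotEdge n (-k) (rotEdge n k e) = e := by
  simp [rotEdge]

lemma rotEdge_cancel' [NeZero n] (k : Fin n) (e : TEdge n) :
    rotEdge n k (rotEdge n (-k) e) = e := by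
  simp [rotEdge]

/-- Rotation as an equivalence of tagged edges. -/
def rotEquiv (n : ℕ) [NeZero n] (k : Fin n) : TEdge n ≃ TEdge n :=
  ⟨rotEdge n k, rotEdge n (-k), rotEdge_cancel k, rotEdge_cancel' k⟩

lemma incident_rot [NeZero n] (k p : Fin n) (e : TEdge n) :
    Incident n (p + k) (rotEdge n k e) ↔ Incident n p e := by
  simp [Incident, rotEdge]

lemma angKey_rot [NeZero n] (k p : Fin n) (e : TEdge n) :
    angKey n (p + k) (rotEdge n k e) = angKey n p e := by
  simp only [angKey, rotEdge, add_left_inj, ccwPos_add]; rfl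

lemma boundaryArrow_rot [NeZero n] (k : Fin n) (Δ : Finset (TEdge n)) {α β : TEdge n} :
    BoundaryArrow n Δ α β →
      BoundaryArrow n (Δ.image (rotEdge n k)) (rotEdge n k α) (rotEdge n k β) := by
  rintro ⟨p, h1, h2, h3, h4, h5⟩
  refine ⟨p + k, (incident_rot k p α).mpr h1, (incident_rot k p β).mpr h2, ?_, ?_, ?_⟩
  · simpa [rotEdge] using h3
  · rw [angKey_rot, angKey_rot]; exact h4
  · intro γ hγ hinc
    rw [Finset.mem_image] at hγ
    obtain ⟨γ₀, hγ₀, rfl⟩ := hγ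
    rw [angKey_rot, angKey_rot, angKey_rot]
    exact h5 γ₀ hγ₀ ((incident_rot k p γ₀).mp hinc)

lemma punctureArrow_rot [NeZero n] (k : Fin n) (Δ : Finset (TEdge n)) {α β : TEdge n} :
    PunctureArrow n Δ α β →
      PunctureArrow n (Δ.image (rotEdge n k)) (rotEdge n k α) (rotEdge n k β) := by
  rintro ⟨h1, h2, h3, h4⟩
  refine ⟨by simpa [rotEdge] using h1, by simpa [rotEdge] using h2,
    by simpa [rotEdge] using h3, ?_⟩
  intro γ hγ hp hne
  rw [Finset.mem_image] at hγ
  obtain ⟨γ₀, hγ₀, rfl⟩ := hγ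
  have hp0 : γ₀.1 = γ₀.2.1 := by simpa [rotEdge] using hp
  have hne0 : γ₀.1 ≠ α.1 := by simpa [rotEdge] using hne
  show ¬(ccwPos n (α.1 + k) (γ₀.1 + k) < ccwPos n (α.1 + k) (β.1 + k))
  rw [ccwPos_add, ccwPos_add]
  exact h4 γ₀ hγ₀ hp0 hne0

lemma rawArrow_rot_mp [NeZero n] (k : Fin n) (Δ : Finset (TEdge n)) {α β : TEdge n} :
    RawArrow n Δ α β → RawArrow n (Δ.image (rotEdge n k)) (rotEdge n k α) (rotEdge n k β) := by
  rintro ⟨hα, hβ, hne, h⟩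
  refine ⟨Finset.mem_image_of_mem _ hα, Finset.mem_image_of_mem _ hβ, ?_, ?_⟩
  · intro hc
    apply hne
    have := congrArg (rotEdge n (-k)) hc
    rwa [rotEdge_cancel, rotEdge_cancel] at this
  · exact h.imp (boundaryArrow_rot k Δ) (punctureArrow_rot k Δ)

lemma image_rot_rot [NeZero n] (k : Fin n) (Δ : Finset (TEdge n)) :
    (Δ.image (rotEdge n k)).image (rotEdge n (-k)) = Δ := by
  rw [Finset.image_image]
  have : rotEdge n (-k) ∘ rotEdge n k = id := funext fun e => rotEdge_cancel k e
  rw [this, Finset.image_id]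

lemma rawArrow_rot [NeZero n] (k : Fin n) (Δ : Finset (TEdge n)) (α β : TEdge n) :
    RawArrow n Δ α β ↔ RawArrow n (Δ.image (rotEdge n k)) (rotEdge n k α) (rotEdge n k β) := by
  constructor
  · exact rawArrow_rot_mp k Δ
  · intro h
    have := rawArrow_rot_mp (-k) (Δ.image (rotEdge n k)) h
    rwa [image_rot_rot, rotEdge_cancel, rotEdge_cancel] at this

lemma qArrow_rot [NeZero n] (k : Fin n) (Δ : Finset (TEdge n)) (α β : TEdge n) :
    QArrow n Δ α β ↔ QArrow n (Δ.image (rotEdge n k)) (rotEdge n k α) (rotEdge n k β) := by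
  unfold QArrow
  rw [← rawArrow_rot k Δ α β, ← rawArrow_rot k Δ β α]

lemma angKey_punct (p : Fin n) {e : TEdge n} (hpe : e.1 = e.2.1) (hi : Incident n p e) :
    e.1 = p ∧ angKey n p e = n + (if e.2.2 then 0 else 1) := by
  have h1 : e.1 = p := by
    rcases hi with h | h
    · exact h
    · exact hpe.trans h
  refine ⟨h1, ?_⟩
  unfold angKey
  rw [if_pos ⟨h1, hpe.symm.trans h1⟩]

lemma angKey_nonpunct_bounds (hn : 0 < n) (p : Fin n) {e : TEdge n}
    (hpe : ¬ e.1 = e.2.1) (hi : Incident n p e) :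
    angKey n p e < n ∨ 2 * n ≤ angKey n p e := by
  unfold angKey
  rw [if_neg (by rintro ⟨ha, hb⟩; exact hpe (ha.trans hb.symm))]
  by_cases h1 : e.1 = p
  · rw [if_pos h1]
    exact Or.inl (Nat.mod_lt _ hn)
  · rw [if_neg h1]
    exact Or.inr (by omega)

lemma invTags_tag {e : TEdge n} (hpe : e.1 = e.2.1) : (invTags n e).2.2 = !e.2.2 := by
  simp [invTags, hpe]

lemma angKey_inv_lt (hn : 2 ≤ n) (p : Fin n) {e f : TEdge n}
    (he : Incident n p e) (hf : Incident n p f)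
    (hsame : e.1 = e.2.1 → f.1 = f.2.1 → e.2.2 = f.2.2) :
    (angKey n p (invTags n e) < angKey n p (invTags n f) ↔ angKey n p e < angKey n p f) := by
  have hn0 : 0 < n := by omega
  by_cases hpe : e.1 = e.2.1 <;> by_cases hpf : f.1 = f.2.1
  · have h1 := (angKey_punct p hpe he).2
    have h2 := (angKey_punct p hpf hf).2
    have h1' := (angKey_punct p (e := invTags n e) hpe he).2
    have h2' := (angKey_punct p (e := invTags n f) hpf hf).2
    rw [h1, h2, h1', h2', invTags_tag hpe, invTags_tag hpf, hsame hpe hpf]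
    simp
  · have h1 := (angKey_punct p hpe he).2
    have h1' := (angKey_punct p (e := invTags n e) hpe he).2
    rcases angKey_nonpunct_bounds hn0 p hpf hf with hb | hb <;>
      · rw [invTags_eq_self hpf, h1, h1', invTags_tag hpe]
        cases e.2.2 <;> simp <;> omega
  · have h2 := (angKey_punct p hpf hf).2
    have h2' := (angKey_punct p (e := invTags n f) hpf hf).2
    rcases angKey_nonpunct_bounds hn0 p hpe he with hb | hb <;>
      · rw [invTags_eq_self hpe, h2, h2', invTags_tag hpf]
        cases f.2.2 <;> simp <;> omega
  · rw [invTags_eq_self hpe, invTags_eq_self hpf]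

lemma boundaryArrow_inv (hn : 2 ≤ n) {Δ : Finset (TEdge n)}
    (hP : ∀ e ∈ Δ, ∀ f ∈ Δ, e.1 = e.2.1 → f.1 = f.2.1 → e.2.2 = f.2.2)
    {α β : TEdge n} (hα : α ∈ Δ) (hβ : β ∈ Δ) :
    BoundaryArrow n Δ α β →
      BoundaryArrow n (Δ.image (invTags n)) (invTags n α) (invTags n β) := by
  rintro ⟨p, h1, h2, h3, h4, h5⟩
  refine ⟨p, h1, h2, h3, ?_, ?_⟩
  · exact (angKey_inv_lt hn p h1 h2 (fun ha hb => absurd ⟨ha, hb⟩ h3)).mpr h4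
  · intro γ hγ hinc
    rw [Finset.mem_image] at hγ
    obtain ⟨γ₀, hγ₀, rfl⟩ := hγ
    have hinc0 : Incident n p γ₀ := hinc
    rintro ⟨ha, hb⟩
    refine h5 γ₀ hγ₀ hinc0 ⟨?_, ?_⟩
    · exact (angKey_inv_lt hn p h1 hinc0 (hP α hα γ₀ hγ₀)).mp ha
    · exact (angKey_inv_lt hn p hinc0 h2 (hP γ₀ hγ₀ β hβ)).mp hb

lemma punctureArrow_inv {Δ : Finset (TEdge n)} {α β : TEdge n} :
    PunctureArrow n Δ α β →
      PunctureArrow n (Δ.image (invTags n)) (invTags n α) (invTags n β) := by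
  rintro ⟨h1, h2, h3, h4⟩
  refine ⟨h1, h2, h3, ?_⟩
  intro γ hγ hp hne
  rw [Finset.mem_image] at hγ
  obtain ⟨γ₀, hγ₀, rfl⟩ := hγ
  exact h4 γ₀ hγ₀ hp hne

lemma rawArrow_inv_mp (hn : 2 ≤ n) {Δ : Finset (TEdge n)}
    (hP : ∀ e ∈ Δ, ∀ f ∈ Δ, e.1 = e.2.1 → f.1 = f.2.1 → e.2.2 = f.2.2)
    {α β : TEdge n} :
    RawArrow n Δ α β → RawArrow n (Δ.image (invTags n)) (invTags n α) (invTags n β) := by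
  rintro ⟨hα, hβ, hne, h⟩
  refine ⟨Finset.mem_image_of_mem _ hα, Finset.mem_image_of_mem _ hβ,
    fun hc => hne (invTags_involutive.injective hc),
    h.imp (boundaryArrow_inv hn hP hα hβ) punctureArrow_inv⟩

lemma hP_image {Δ : Finset (TEdge n)}
    (hP : ∀ e ∈ Δ, ∀ f ∈ Δ, e.1 = e.2.1 → f.1 = f.2.1 → e.2.2 = f.2.2) :
    ∀ e ∈ Δ.image (invTags n), ∀ f ∈ Δ.image (invTags n),
      e.1 = e.2.1 → f.1 = f.2.1 → e.2.2 = f.2.2 := by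
  intro e' he' f' hf' hpe hpf
  rw [Finset.mem_image] at he' hf'
  obtain ⟨e, he, rfl⟩ := he'
  obtain ⟨f, hf, rfl⟩ := hf'
  have hpe0 : e.1 = e.2.1 := hpe
  have hpf0 : f.1 = f.2.1 := hpf
  rw [invTags_tag hpe0, invTags_tag hpf0, hP e he f hf hpe0 hpf0]

lemma image_inv_inv (Δ : Finset (TEdge n)) :
    (Δ.image (invTags n)).image (invTags n) = Δ := by
  rw [Finset.image_image, invTags_involutive.comp_self, Finset.image_id]

lemma rawArrow_inv (hn : 2 ≤ n) {Δ : Finset (TEdge n)}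
    (hP : ∀ e ∈ Δ, ∀ f ∈ Δ, e.1 = e.2.1 → f.1 = f.2.1 → e.2.2 = f.2.2)
    (α β : TEdge n) :
    RawArrow n Δ α β ↔ RawArrow n (Δ.image (invTags n)) (invTags n α) (invTags n β) := by
  constructor
  · exact rawArrow_inv_mp hn hP
  · intro h
    have := rawArrow_inv_mp hn (hP_image hP) h
    rwa [image_inv_inv, invTags_involutive α, invTags_involutive β] at this

lemma qArrow_inv (hn : 2 ≤ n) {Δ : Finset (TEdge n)}
    (hP : ∀ e ∈ Δ, ∀ f ∈ Δ, e.1 = e.2.1 → f.1 = f.2.1 → e.2.2 = f.2.2)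
    (α β : TEdge n) :
    QArrow n Δ α β ↔ QArrow n (Δ.image (invTags n)) (invTags n α) (invTags n β) := by
  unfold QArrow
  rw [← rawArrow_inv hn hP α β, ← rawArrow_inv hn hP β α]

lemma mem_image_iff {α β : Type} [DecidableEq β] {f : α → β} (s : Finset α) (a : α)
    (h : Function.Injective f) : f a ∈ s.image f ↔ a ∈ s := by
  rw [Finset.mem_image]
  exact ⟨fun ⟨b, hb, hba⟩ => h hba ▸ hb, fun ha => ⟨a, ha, rfl⟩⟩

lemma tedge_ext {e f : TEdge n} (h1 : e.1 = f.1) (h2 : e.2.1 = f.2.1)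
    (h3 : e.2.2 = f.2.2) : e = f := by
  obtain ⟨a, b, c⟩ := e
  obtain ⟨d, g, h⟩ := f
  simp_all

lemma exceptional {Δ : Finset (TEdge n)} (hΔ : IsTriangulation n Δ)
    (hnP : ¬ ∀ e ∈ Δ, ∀ f ∈ Δ, e.1 = e.2.1 → f.1 = f.2.1 → e.2.2 = f.2.2) :
    Δ.image (invTags n) = Δ := by
  have hc : ∀ e ∈ Δ, ∀ f ∈ Δ, e.1 = e.2.1 → f.1 = f.2.1 → e.1 ≠ f.1 → e.2.2 = f.2.2 := by
    intro e he f hf hpe hpf hne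
    by_contra htag
    refine hΔ.2.1 e he f hf ?_
    unfold Cross
    rw [if_pos hpe, if_pos hpf]
    exact ⟨hne, htag⟩
  push_neg at hnP
  obtain ⟨e, he, f, hf, hpe, hpf, htag⟩ := hnP
  have hef : e.1 = f.1 := by
    by_contra hne
    exact htag (hc e he f hf hpe hpf hne)
  have hsub : Δ.image (invTags n) ⊆ Δ := by
    intro g' hg'
    rw [Finset.mem_image] at hg'
    obtain ⟨g, hg, rfl⟩ := hg'
    by_cases hpg : g.1 = g.2.1
    · have hg1 : g.1 = e.1 := by
        by_contra hne
        have h1 := hc g hg e he hpg hpe hne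
        have h2 := hc g hg f hf hpg hpf (fun h => hne (h.trans hef.symm))
        exact htag (h1.symm.trans h2)
      have hkey : invTags n g = e ∨ invTags n g = f := by
        by_cases ht : (!g.2.2) = e.2.2
        · left
          exact tedge_ext hg1 ((hpg.symm.trans hg1).trans hpe) ((invTags_tag hpg).trans ht)
        · right
          have ht2 : (!g.2.2) = f.2.2 := by
            have h1 : (!g.2.2) = !e.2.2 := Bool.eq_not_of_ne ht
            have h2 : e.2.2 = !f.2.2 := Bool.eq_not_of_ne htag
            rw [h2, Bool.not_not] at h1
            exact h1
          exact tedge_ext (hg1.trans hef) ((hpg.symm.trans (hg1.trans hef)).trans hpf)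
            ((invTags_tag hpg).trans ht2)
      rcases hkey with h | h <;> rw [h] <;> assumption
    · rw [invTags_eq_self hpg]; exact hg
  exact Finset.eq_of_subset_of_card_le hsub
    (by rw [Finset.card_image_of_injective _ invTags_involutive.injective])

end S15

/-- if two triangulations of the punctured `n`-gon (`n ≥ 5`) differ
by a rotation or by inverting all tags, then their associated quivers are
isomorphic. -/
theorem stmt_15 (n : ℕ) (hn : 5 ≤ n) (Δ Δ' : Finset (TEdge n))
    (hΔ : IsTriangulation n Δ) (hΔ' : IsTriangulation n Δ')
    (h : (∃ k : Fin n, Δ' = Δ.image (rotEdge n k)) ∨ Δ' = Δ.image (invTags n)) :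
    ∃ f : {e // e ∈ Δ} ≃ {e // e ∈ Δ'},
      ∀ α β : {e // e ∈ Δ},
        QArrow n Δ α.1 β.1 ↔ QArrow n Δ' (f α).1 (f β).1 := by
  haveI : NeZero n := ⟨by omega⟩
  have hn2 : 2 ≤ n := by omega
  rcases h with ⟨k, rfl⟩ | rfl
  · refine ⟨Equiv.subtypeEquiv (S15.rotEquiv n k) (fun a => ?_), fun α β => ?_⟩
    · exact (S15.mem_image_iff Δ a (S15.rotEquiv n k).injective).symm
    · exact S15.qArrow_rot k Δ α.1 β.1
  · by_cases hP : ∀ e ∈ Δ, ∀ f ∈ Δ, e.1 = e.2.1 → f.1 = f.2.1 → e.2.2 = f.2.2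
    · refine ⟨Equiv.subtypeEquiv S15.invTags_involutive.toPerm (fun a => ?_), fun α β => ?_⟩
      · exact (S15.mem_image_iff Δ a S15.invTags_involutive.injective).symm
      · exact S15.qArrow_inv hn2 hP α.1 β.1
    · have himg : Δ.image (invTags n) = Δ := S15.exceptional hΔ hP
      refine ⟨Equiv.subtypeEquivRight (fun e => by rw [himg]), fun α β => ?_⟩
      show QArrow n Δ α.1 β.1 ↔ QArrow n (Δ.image (invTags n)) α.1 β.1
      rw [himg]
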